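/- arXiv:2207.13802 — 2 statements merged into one kernel-verified Lean document; each statement's English description precedes it below -/
import Mathlib

section
/- With L and e as in the randomized scrambling scheme (diagonal of L uniform on nonzero elements of Z_b, other entries of L and all entries of e uniform on Z_b, all independent), if two fixed digit vectors y and y' satisfy y_h = y'_h for h < k and y_k ≠ y'_k, then the pair (x_k, x'_k) of k-th digits of x = Ly + e and x' = Ly' + e is uniformly distributed on {(u,v) ∈ Z_b² : u ≠ v}. -/
open Finset

/-- If `y` and `y'` agree in digits `h < k` and differ in digit `k`, then under
the random scrambling (diagonal entry of `L` uniform on nonzero elements of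
`Z_b`, strictly-lower entries of `L` and `e_k` uniform on `Z_b`, all
independent) the pair `(x_k, x'_k)` of scrambled `k`-th digits is uniformly
distributed on `{(u,v) ∈ Z_b² : u ≠ v}`: each such pair occurs with probability
`1/(b(b-1))`. -/
theorem scrambled_digit_pair_uniform (b : ℕ) [Fact (Nat.Prime b)]
    (k : ℕ) (y y' : ℕ → ZMod b)
    (hagree : ∀ h, h < k → y h = y' h) (hdiff : y k ≠ y' k)
    (u v : ZMod b) (huv : u ≠ v) :
    (Finset.univ.filter
        (fun ω : {l : ZMod b // l ≠ 0} × (Fin k → ZMod b) × ZMod b =>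
          (ω.1 : ZMod b) * y k + (∑ h : Fin k, ω.2.1 h * y h) + ω.2.2 = u ∧
          (ω.1 : ZMod b) * y' k + (∑ h : Fin k, ω.2.1 h * y' h) + ω.2.2 = v)).card
        * (b * (b - 1)) =
      Fintype.card ({l : ZMod b // l ≠ 0} × (Fin k → ZMod b) × ZMod b) := by
  have hb : Nat.Prime b := Fact.out
  have hd : y k - y' k ≠ 0 := sub_ne_zero.mpr hdiff
  have huv' : u - v ≠ 0 := sub_ne_zero.mpr huv
  set l₀ : ZMod b := (u - v) * (y k - y' k)⁻¹ with hl₀def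
  have hl₀ : l₀ ≠ 0 := by
    apply mul_ne_zero huv'
    exact inv_ne_zero hd
  have hl₀d : l₀ * (y k - y' k) = u - v := by
    rw [hl₀def, mul_assoc, inv_mul_cancel₀ hd, mul_one]
  -- sums over `Fin k` of `y` and `y'` agree
  have hsum : ∀ c : Fin k → ZMod b,
      (∑ h : Fin k, c h * y h) = ∑ h : Fin k, c h * y' h := by
    intro c
    exact Finset.sum_congr rfl fun h _ => by rw [hagree h h.isLt]
  -- the filter is in bijection with Fin k → ZMod b
  have hcard : (Finset.univ.filter
        (fun ω : {l : ZMod b // l ≠ 0} × (Fin k → ZMod b) × ZMod b =>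
          (ω.1 : ZMod b) * y k + (∑ h : Fin k, ω.2.1 h * y h) + ω.2.2 = u ∧
          (ω.1 : ZMod b) * y' k + (∑ h : Fin k, ω.2.1 h * y' h) + ω.2.2 = v)).card
      = Fintype.card (Fin k → ZMod b) := by
    rw [← Finset.card_univ]
    apply Finset.card_bij'
      (i := fun (ω : {l : ZMod b // l ≠ 0} × (Fin k → ZMod b) × ZMod b) _ => ω.2.1)
      (j := fun (c : Fin k → ZMod b) _ =>
        ((⟨l₀, hl₀⟩, c, u - l₀ * y k - ∑ h : Fin k, c h * y h) :
          {l : ZMod b // l ≠ 0} × (Fin k → ZMod b) × ZMod b))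
    · intro ω hω; exact Finset.mem_univ _
    · intro c _
      simp only [Finset.mem_filter, Finset.mem_univ, true_and]
      constructor
      · ring
      · rw [← hsum c]
        have : l₀ * y' k + (∑ h : Fin k, c h * y h) +
            (u - l₀ * y k - ∑ h : Fin k, c h * y h)
            = u - l₀ * (y k - y' k) := by ring
        rw [this, hl₀d]; ring
    · intro ω hω
      simp only [Finset.mem_filter, Finset.mem_univ, true_and] at hω
      obtain ⟨h1, h2⟩ := hω
      have hsub : (ω.1 : ZMod b) * (y k - y' k) = u - v := by
        rw [hsum ω.2.1] at h1
        have := congrArg₂ (· - ·) h1 h2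
        linear_combination this
      have hω1 : (ω.1 : ZMod b) = l₀ := by
        rw [hl₀def, ← hsub, mul_assoc, mul_inv_cancel₀ hd, mul_one]
      have hωe : ω.2.2 = u - l₀ * y k - ∑ h : Fin k, ω.2.1 h * y h := by
        rw [← hω1, ← h1]; ring
      ext
      · exact hω1.symm
      · rfl
      · exact hωe.symm
    · intro c _; rfl
  rw [hcard]
  -- count the full space
  have h1 : Fintype.card {l : ZMod b // l ≠ 0} = b - 1 := by
    have : Fintype.card {l : ZMod b // l = 0} = 1 := Fintype.card_subtype_eq (0 : ZMod b)
    have h2 := Fintype.card_subtype_compl (fun l : ZMod b => l = 0)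
    simp only [this, ZMod.card] at h2
    exact h2
  rw [Fintype.card_prod, Fintype.card_prod, h1, Fintype.card_fun, ZMod.card, Fintype.card_fin]
  ring
end

section
/- Multiplying each generator matrix on the left by a nonsingular lower triangular matrix preserves the linear-independence (t-value) condition: let b be prime and C_1, …, C_s be ∞×∞ matrices over Z_b satisfying the (t,m)-condition that for all nonnegative d_1+⋯+d_s = m−t, the row vectors c_{jmk} (first m columns of row k of C_j) for k = 1,…,d_j, j = 1,…,s, are linearly independent over Z_b. If L_1, …, L_s are nonsingular lower triangular matrices over Z_b, then the matrices L_1 C_1, …, L_s C_s satisfy the same (t,m)-condition. -/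
/-- Left multiplication of the generator matrices by nonsingular lower
triangular matrices preserves the linear-independence `(t,m)`-condition.
`C j h c` is the entry of the generator matrix `C_j` in row `h`, column `c`
(rows and columns indexed from `0`); `c_{jmk}` is the vector of the first `m`
entries of row `k`. -/
theorem scrambling_preserves_t_condition (b : ℕ) [Fact (Nat.Prime b)]
    (s m t : ℕ) (ht : t ≤ m)
    (C : Fin s → ℕ → ℕ → ZMod b)
    (L : Fin s → ℕ → ℕ → ZMod b)
    (hLtri : ∀ j h k, h < k → L j h k = 0)
    (hLdiag : ∀ j k, L j k k ≠ 0)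
    (hC : ∀ d : Fin s → ℕ, (∑ j, d j) = m - t →
      LinearIndependent (ZMod b)
        (fun p : (Σ j : Fin s, Fin (d j)) => fun c : Fin m => C p.1 (p.2 : ℕ) (c : ℕ))) :
    ∀ d : Fin s → ℕ, (∑ j, d j) = m - t →
      LinearIndependent (ZMod b)
        (fun p : (Σ j : Fin s, Fin (d j)) => fun c : Fin m =>
          ∑ h ∈ Finset.range ((p.2 : ℕ) + 1), L p.1 (p.2 : ℕ) h * C p.1 h (c : ℕ)) := by
  intro d hd
  rw [Fintype.linearIndependent_iff]
  intro g hg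
  -- the coefficients of the original rows in the combination ∑ g p • (L C) row
  set w : (Σ j : Fin s, Fin (d j)) → ZMod b :=
    fun q => ∑ k : Fin (d q.1),
      if (q.2 : ℕ) ≤ (k : ℕ) then g ⟨q.1, k⟩ * L q.1 (k : ℕ) (q.2 : ℕ) else 0 with hw
  have key : ∑ q : (Σ j : Fin s, Fin (d j)),
      w q • (fun c : Fin m => C q.1 (q.2 : ℕ) (c : ℕ)) = 0 := by
    rw [← hg]
    funext c
    simp only [Finset.sum_apply, Pi.smul_apply, smul_eq_mul]
    rw [← Finset.univ_sigma_univ, Finset.sum_sigma, Finset.sum_sigma]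
    refine Finset.sum_congr rfl fun j _ => ?_
    simp only [hw]
    -- LHS: ∑ h, (∑ k, ite) * C; RHS: ∑ k, g * ∑_{h ≤ k} L * C
    have hR : ∀ k : Fin (d j),
        (∑ h ∈ Finset.range ((k : ℕ) + 1), L j (k : ℕ) h * C j h (c : ℕ))
        = ∑ h : Fin (d j), if (h : ℕ) ≤ (k : ℕ)
            then L j (k : ℕ) (h : ℕ) * C j (h : ℕ) (c : ℕ) else 0 := by
      intro k
      rw [Fin.sum_univ_eq_sum_range (fun h => if h ≤ (k : ℕ)
          then L j (k : ℕ) h * C j h (c : ℕ) else 0), ← Finset.sum_filter]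
      refine Finset.sum_congr ?_ fun _ _ => rfl
      ext x
      simp only [Finset.mem_filter, Finset.mem_range]
      omega
    simp only [hR, Finset.mul_sum, Finset.sum_mul, ite_mul, zero_mul, mul_ite, mul_zero]
    rw [Finset.sum_comm]
    refine Finset.sum_congr rfl fun k _ => Finset.sum_congr rfl fun h _ => ?_
    by_cases hhk : (h : ℕ) ≤ (k : ℕ) <;> simp [hhk] <;> ring
  have hw0 : ∀ q, w q = 0 := (Fintype.linearIndependent_iff.mp (hC d hd)) w key
  -- descending induction kills g
  have main : ∀ n : ℕ, ∀ j : Fin s, ∀ k : Fin (d j), d j - (k : ℕ) ≤ n → g ⟨j, k⟩ = 0 := by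
    intro n
    induction n with
    | zero => intro j k hk; exact absurd hk (by have := k.2; omega)
    | succ n ih =>
      intro j k hk
      have h0 := hw0 ⟨j, k⟩
      rw [hw] at h0
      simp only at h0
      rw [Finset.sum_eq_single k (fun k' _ hne => ?_) (by simp)] at h0
      · rw [if_pos le_rfl] at h0
        exact (mul_eq_zero.mp h0).resolve_right (hLdiag j (k : ℕ))
      · by_cases hle : (k : ℕ) ≤ (k' : ℕ)
        · have hlt : (k : ℕ) < (k' : ℕ) := lt_of_le_of_ne hle
            (fun e => hne (Fin.ext e.symm))
          rw [ih j k' (by have := k'.2; omega)]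
          simp
        · rw [if_neg hle]
  intro p
  exact main (d p.1) p.1 p.2 (Nat.sub_le _ _)
end
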